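/- Let T be a locally finite face-to-face tiling of Euclidean d-space ℝ^d by convex d-polytopes and let k ≥ 1. If two tiles P and P' of T have isomorphic centered k-th coronas (P, C_k(P)) and (P', C_k(P')), then their centered (k−1)-st coronas (P, C_{k−1}(P)) and (P', C_{k−1}(P')) are also isomorphic; consequently N_{k−1}(T) ≤ N_k(T). -/

import Mathlib

noncomputable section
open scoped Classical

abbrev EucSp (d : ℕ) := EuclideanSpace ℝ (Fin d)

/-- `F` is a face of the convex set `P` (exposed face; includes `∅` and `P` itself). -/
def IsFaceOf {d : ℕ} (F P : Set (EucSp d)) : Prop := IsExposed ℝ P F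

/-- A convex `d`-polytope: the convex hull of a finite point set, with nonempty interior. -/
def IsPolytope (d : ℕ) (P : Set (EucSp d)) : Prop :=
  (∃ s : Finset (EucSp d), P = convexHull ℝ (s : Set (EucSp d))) ∧ (interior P).Nonempty

/-- Affine dimension of a set, the empty set having dimension `-1`. -/
def fdimZ {d : ℕ} (F : Set (EucSp d)) : ℤ :=
  if F = ∅ then -1 else (Module.finrank ℝ (affineSpan ℝ F).direction : ℤ)

/-- A locally finite face-to-face tiling of `ℝ^d` by convex `d`-polytopes. -/
structure Tiling (d : ℕ) where
  tiles : Set (Set (EucSp d))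
  countable : tiles.Countable
  polytope : ∀ P ∈ tiles, IsPolytope d P
  covers : ⋃₀ tiles = Set.univ
  disjointInteriors : ∀ P ∈ tiles, ∀ Q ∈ tiles, P ≠ Q → interior P ∩ interior Q = ∅
  locallyFinite : ∀ x : EucSp d, ∃ U ∈ nhds x, {P | P ∈ tiles ∧ (P ∩ U).Nonempty}.Finite
  faceToFace : ∀ P ∈ tiles, ∀ Q ∈ tiles, IsFaceOf (P ∩ Q) P ∧ IsFaceOf (P ∩ Q) Q

variable {d : ℕ}

/-- A sequence of `n+1` tiles from `P` to `Q` in which any two consecutive tiles meet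
in a face of dimension at least `d - 2`. -/
def TileChain (T : Tiling d) (P Q : Set (EucSp d)) (n : ℕ) : Prop :=
  ∃ f : ℕ → Set (EucSp d), f 0 = P ∧ f n = Q ∧ (∀ j ≤ n, f j ∈ T.tiles) ∧
    ∀ j, 1 ≤ j → j ≤ n → (d : ℤ) - 2 ≤ fdimZ (f (j - 1) ∩ f j)

/-- The distance between two tiles of `T` (`⊤` if they cannot be joined). -/
def tileDist (T : Tiling d) (P Q : Set (EucSp d)) : ℕ∞ :=
  sInf {n : ℕ∞ | ∃ m : ℕ, n = (m : ℕ∞) ∧ TileChain T P Q m}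

/-- The `k`-th corona of `P`: the set of all faces of tiles at distance at most `k` from `P`. -/
def corona (T : Tiling d) (k : ℕ) (P : Set (EucSp d)) : Set (Set (EucSp d)) :=
  {F | ∃ Q ∈ T.tiles, tileDist T P Q ≤ (k : ℕ∞) ∧ IsFaceOf F Q}

/-- The set of all faces of tiles of `T` (the face-lattice of `T`), ordered by inclusion. -/
def facesOf (T : Tiling d) : Set (Set (EucSp d)) :=
  {F | ∃ Q ∈ T.tiles, IsFaceOf F Q}

/-- An order isomorphism between the `k`-th coronas of `P` and `P'` is an isomorphism of
centered coronas when it maps the center `P` to the center `P'`. -/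
def IsCenteredIso (T : Tiling d) (k : ℕ) (P P' : Set (EucSp d))
    (e : ↥(corona T k P) ≃o ↥(corona T k P')) : Prop :=
  ∀ (hP : P ∈ corona T k P) (hP' : P' ∈ corona T k P'), e ⟨P, hP⟩ = ⟨P', hP'⟩

/-- The centered `k`-th coronas `(P, C_k(P))` and `(P', C_k(P'))` are isomorphic. -/
def CoronasIsomorphic (T : Tiling d) (k : ℕ) (P P' : Set (EucSp d)) : Prop :=
  ∃ e : ↥(corona T k P) ≃o ↥(corona T k P'), IsCenteredIso T k P P' e

/-- `N_k(T)`: the number of isomorphism classes of centered `k`-th coronas of tiles of `T`. -/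
def Ncount (T : Tiling d) (k : ℕ) : Cardinal :=
  Cardinal.mk (Quot (fun P Q : ↥T.tiles =>
    CoronasIsomorphic T k (P : Set (EucSp d)) (Q : Set (EucSp d))))

/-- Two tiles are equivalent under the combinatorial automorphism group `Γ(T)`. -/
def TilesEquiv (T : Tiling d) (P Q : Set (EucSp d)) : Prop :=
  ∃ (φ : ↥(facesOf T) ≃o ↥(facesOf T)) (hP : P ∈ facesOf T) (hQ : Q ∈ facesOf T),
    φ ⟨P, hP⟩ = ⟨Q, hQ⟩

/-- The number of orbits of `Γ(T)` on the tiles of `T`. -/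
def orbitCount (T : Tiling d) : Cardinal :=
  Cardinal.mk (Quot (fun P Q : ↥T.tiles =>
    TilesEquiv T (P : Set (EucSp d)) (Q : Set (EucSp d))))

/-- `Γ(C_{k-1}(P)) = Γ(C_k(P))`: every automorphism of the centered `(k-1)`-st corona of `P`
extends to an automorphism of the centered `k`-th corona of `P`. -/
def AutosExtend (T : Tiling d) (k : ℕ) (P : Set (EucSp d)) : Prop :=
  ∀ e : ↥(corona T (k - 1) P) ≃o ↥(corona T (k - 1) P), IsCenteredIso T (k - 1) P P e →
    ∃ f : ↥(corona T k P) ≃o ↥(corona T k P), IsCenteredIso T k P P f ∧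
      ∀ F (hF : F ∈ corona T (k - 1) P) (hF' : F ∈ corona T k P),
        ((f ⟨F, hF'⟩ : Set (EucSp d))) = ((e ⟨F, hF⟩ : Set (EucSp d)))

set_option maxHeartbeats 1000000

section AuxCorona
open scoped RealInnerProductSpace

lemma hull_le_of_max {V : Finset (EucSp d)} {l : EucSp d →L[ℝ] ℝ} {c : ℝ}
    (h : ∀ v ∈ V, l v ≤ c) : ∀ y ∈ convexHull ℝ (V : Set (EucSp d)), l y ≤ c := by
  intro y hy
  have : convexHull ℝ (V : Set (EucSp d)) ⊆ {y | l y ≤ c} :=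
    convexHull_min (fun w hw => h w hw) (convex_halfSpace_le l.toLinearMap.isLinear c)
  exact this hy

lemma hull_ge_of_min {V : Finset (EucSp d)} {l : EucSp d →L[ℝ] ℝ} {c : ℝ}
    (h : ∀ v ∈ V, c ≤ l v) : ∀ y ∈ convexHull ℝ (V : Set (EucSp d)), c ≤ l y := by
  intro y hy
  have : convexHull ℝ (V : Set (EucSp d)) ⊆ {y | c ≤ l y} :=
    convexHull_min (fun w hw => h w hw) (convex_halfSpace_ge l.toLinearMap.isLinear c)
  exact this hy

/-- The argmax set of a linear functional on the hull of a finite set is the hull of the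
argmax subset. -/
lemma argmax_hull (V : Finset (EucSp d)) (hV : V.Nonempty) (l : EucSp d →L[ℝ] ℝ) :
    {x ∈ convexHull ℝ (V : Set (EucSp d)) | ∀ y ∈ convexHull ℝ (V : Set (EucSp d)), l y ≤ l x}
      = convexHull ℝ ((V.filter (fun v => ∀ w ∈ V, l w ≤ l v)) : Set (EucSp d)) := by
  obtain ⟨v0, hv0, hmax⟩ := V.exists_max_image l hV
  set c := l v0 with hc
  have hv0' : v0 ∈ V.filter (fun v => ∀ w ∈ V, l w ≤ l v) := by
    simp only [Finset.mem_filter]; exact ⟨hv0, hmax⟩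
  have hVle : ∀ y ∈ convexHull ℝ (V : Set (EucSp d)), l y ≤ c := hull_le_of_max hmax
  ext x
  simp only [Set.mem_sep_iff]
  constructor
  · rintro ⟨hx, hargm⟩
    have hxc : l x = c := le_antisymm (hVle x hx)
      (hargm v0 (subset_convexHull ℝ _ hv0))
    rw [Finset.convexHull_eq] at hx
    obtain ⟨w, hw0, hw1, hxeq⟩ := hx
    have hlx : l x = ∑ y ∈ V, w y * l y := by
      rw [← hxeq, Finset.centerMass_eq_of_sum_1 _ _ hw1, map_sum]
      simp [mul_comm]
    have hsum0 : ∑ y ∈ V, w y * (c - l y) = 0 := by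
      have : ∑ y ∈ V, w y * (c - l y) = c * (∑ y ∈ V, w y) - ∑ y ∈ V, w y * l y := by
        rw [Finset.mul_sum, ← Finset.sum_sub_distrib]
        congr 1; ext y; ring
      rw [this, hw1, ← hlx, hxc]; ring
    have hall : ∀ y ∈ V, w y * (c - l y) = 0 := by
      rw [← Finset.sum_eq_zero_iff_of_nonneg]
      · exact hsum0
      · intro i hi
        exact mul_nonneg (hw0 i hi) (by linarith [hmax i hi])
    have hsupp : V.filter (fun y => w y ≠ 0) ⊆ V.filter (fun v => ∀ w ∈ V, l w ≤ l v) := by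
      intro y hy
      simp only [Finset.mem_filter] at hy ⊢
      refine ⟨hy.1, ?_⟩
      have := hall y hy.1
      have hly : l y = c := by
        rcases mul_eq_zero.1 this with h | h
        · exact absurd h hy.2
        · linarith
      intro w' hw'; rw [hly]; exact hmax w' hw'
    have hxmem : x ∈ convexHull ℝ ((V.filter (fun y => w y ≠ 0)) : Set (EucSp d)) := by
      rw [← hxeq, ← Finset.centerMass_filter_ne_zero (w := w) id]
      refine Finset.centerMass_mem_convexHull _ (fun i hi => hw0 i (Finset.filter_subset _ _ hi)) ?_
        (fun i hi => by exact_mod_cast hi)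
      · rw [Finset.sum_filter_ne_zero, hw1]; norm_num
    exact convexHull_mono (by exact_mod_cast hsupp) hxmem
  · intro hx
    have hsub : (V.filter (fun v => ∀ w ∈ V, l w ≤ l v) : Set (EucSp d)) ⊆ (V : Set (EucSp d)) := by
      exact_mod_cast Finset.filter_subset _ _
    refine ⟨convexHull_mono hsub hx, ?_⟩
    intro y hy
    have hxge : c ≤ l x := by
      refine hull_ge_of_min (fun v hv => ?_) x hx
      simp only [Finset.mem_filter] at hv
      exact hv.2 v0 hv0
    exact le_trans (hVle y hy) hxge

/-- an exposed face of a face of `conv V` is an exposed face of `conv V`. -/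
lemma exposed_trans (V : Finset (EucSp d)) {A G : Set (EucSp d)}
    (hA : IsExposed ℝ (convexHull ℝ (V : Set (EucSp d))) A) (hG : IsExposed ℝ A G) :
    IsExposed ℝ (convexHull ℝ (V : Set (EucSp d))) G := by
  intro hne
  have hAne : A.Nonempty := hne.mono hG.subset
  obtain ⟨l, hl⟩ := hA hAne
  obtain ⟨m, hm⟩ := hG hne
  have hV : V.Nonempty := by
    rcases V.eq_empty_or_nonempty with h | h
    · exfalso; rw [h] at hl; simp at hl; rw [hl] at hAne; exact Set.not_nonempty_empty hAne
    · exact h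
  set V1 := V.filter (fun v => ∀ w ∈ V, l w ≤ l v) with hV1def
  have hA1 : A = convexHull ℝ (V1 : Set (EucSp d)) := by rw [hl]; exact argmax_hull V hV l
  have hV1ne : V1.Nonempty := by
    rw [← Finset.coe_nonempty, ← convexHull_nonempty_iff (𝕜 := ℝ), ← hA1]; exact hAne
  set V2 := V1.filter (fun v => ∀ w ∈ V1, m w ≤ m v) with hV2def
  have hG2 : G = convexHull ℝ (V2 : Set (EucSp d)) := by
    rw [hm, hA1]; exact argmax_hull V1 hV1ne m
  have hV2ne : V2.Nonempty := by
    rw [← Finset.coe_nonempty, ← convexHull_nonempty_iff (𝕜 := ℝ), ← hG2]; exact hne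
  -- the common values
  obtain ⟨v1, hv1⟩ := hV1ne
  obtain ⟨v2, hv2⟩ := hV2ne
  set c : ℝ := l v1 with hcdef
  set c2 : ℝ := m v2 with hc2def
  have hV1sub : V1 ⊆ V := Finset.filter_subset _ _
  have hV2sub1 : V2 ⊆ V1 := Finset.filter_subset _ _
  have hlc : ∀ v ∈ V1, l v = c := by
    intro v hv
    rw [hV1def, Finset.mem_filter] at hv hv1
    exact le_antisymm (hv1.2 v (hv.1)) (hv.2 v1 hv1.1)
  have hlltc : ∀ v ∈ V, v ∉ V1 → l v < c := by
    intro v hv hv1'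
    rcases lt_or_ge (l v) c with h | h
    · exact h
    · exfalso; apply hv1'
      rw [hV1def, Finset.mem_filter]
      refine ⟨hv, fun w hw => ?_⟩
      rw [hV1def, Finset.mem_filter] at hv1
      exact le_trans (hv1.2 w hw) (le_trans h le_rfl) |>.trans le_rfl |>.trans le_rfl
  have hmc2 : ∀ v ∈ V2, m v = c2 := by
    intro v hv
    rw [hV2def, Finset.mem_filter] at hv hv2
    exact le_antisymm (hv2.2 v hv.1) (hv.2 v2 hv2.1)
  have hmltc2 : ∀ v ∈ V1, v ∉ V2 → m v < c2 := by
    intro v hv hv2'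
    rcases lt_or_ge (m v) c2 with h | h
    · exact h
    · exfalso; apply hv2'
      rw [hV2def, Finset.mem_filter]
      refine ⟨hv, fun w hw => ?_⟩
      rw [hV2def, Finset.mem_filter] at hv2
      exact le_trans (hv2.2 w hw) h
  -- choose ε
  set g : EucSp d → ℝ := fun v => if m v ≤ c2 then 1 else (c - l v) / (m v - c2) with hgdef
  have hgpos : ∀ v ∈ V, v ∉ V1 → 0 < g v := by
    intro v hv hv1'
    rw [hgdef]
    by_cases h : m v ≤ c2
    · simp [h]
    · simp only [h, if_false]
      exact div_pos (by linarith [hlltc v hv hv1']) (by linarith [lt_of_not_ge h])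
  set W := (V \ V1) with hWdef
  set b : ℝ := if hW : W.Nonempty then min 1 (W.inf' hW g) else 1 with hbdef
  have hbpos : 0 < b := by
    rw [hbdef]
    split_ifs with hW
    · refine lt_min one_pos ?_
      rw [Finset.lt_inf'_iff]
      intro v hv
      rw [hWdef, Finset.mem_sdiff] at hv
      exact hgpos v hv.1 hv.2
    · exact one_pos
  have hble : ∀ v ∈ V, v ∉ V1 → b ≤ g v := by
    intro v hv hv1'
    have hvW : v ∈ W := by rw [hWdef, Finset.mem_sdiff]; exact ⟨hv, hv1'⟩
    have hW : W.Nonempty := ⟨v, hvW⟩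
    rw [hbdef, dif_pos hW]
    exact le_trans (min_le_right _ _) (Finset.inf'_le g hvW)
  set ε : ℝ := b / 2 with hεdef
  have hεpos : 0 < ε := by positivity
  set L : EucSp d →L[ℝ] ℝ := l + ε • m with hLdef
  have hLapp : ∀ v, L v = l v + ε * m v := by
    intro v; rw [hLdef]; simp
  -- key evaluations
  have hkey1 : ∀ v ∈ V2, L v = c + ε * c2 := by
    intro v hv
    rw [hLapp, hlc v (hV2sub1 hv), hmc2 v hv]
  have hkey2 : ∀ v ∈ V, v ∉ V2 → L v < c + ε * c2 := by
    intro v hv hv2'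
    by_cases h1 : v ∈ V1
    · have := hmltc2 v h1 hv2'
      rw [hLapp, hlc v h1]
      nlinarith
    · have hlv := hlltc v hv h1
      rw [hLapp]
      by_cases h : m v ≤ c2
      · nlinarith
      · have hgv : b ≤ g v := hble v hv h1
        have hmv : (0:ℝ) < m v - c2 := by linarith [lt_of_not_ge h]
        have hgv' : b ≤ (c - l v) / (m v - c2) := by
          rw [hgdef] at hgv; simpa [h] using hgv
        have hεlt : ε < (c - l v) / (m v - c2) := by rw [hεdef]; linarith
        have := (lt_div_iff₀ hmv).mp hεlt
        nlinarith
  -- the argmax of L over V is exactly V2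
  have hfilter : V.filter (fun v => ∀ w ∈ V, L w ≤ L v) = V2 := by
    ext v
    simp only [Finset.mem_filter]
    constructor
    · rintro ⟨hv, hmax⟩
      by_contra hv2'
      have h1 := hkey2 v hv hv2'
      have h2 := hmax v2 (hV1sub (hV2sub1 hv2))
      rw [hkey1 v2 hv2] at h2
      linarith
    · intro hv
      refine ⟨hV1sub (hV2sub1 hv), fun w hw => ?_⟩
      rw [hkey1 v hv]
      by_cases h : w ∈ V2
      · rw [hkey1 w h]
      · exact (hkey2 w hw h).le
  exact ⟨L, by rw [hG2, ← hfilter, ← argmax_hull V hV L]⟩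

/-- an exposed face restricted to an intermediate set is exposed there. -/
lemma exposed_of_between {S B G : Set (EucSp d)} (hG : IsExposed ℝ S G)
    (hGB : G ⊆ B) (hBS : B ⊆ S) : IsExposed ℝ B G := by
  intro hne
  obtain ⟨l, hl⟩ := hG hne
  refine ⟨l, ?_⟩
  ext x
  constructor
  · intro hx
    have hx' : x ∈ S ∧ ∀ y ∈ S, l y ≤ l x := by rw [hl] at hx; exact hx
    exact ⟨hGB hx, fun y hy => hx'.2 y (hBS hy)⟩
  · rintro ⟨hxB, hmax⟩
    obtain ⟨g, hg⟩ := hne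
    have hg' : g ∈ S ∧ ∀ y ∈ S, l y ≤ l g := by rw [hl] at hg; exact hg
    rw [hl]
    exact ⟨hBS hxB, fun y hy => le_trans (hg'.2 y hy) (hmax g (hGB hg))⟩

/-- strict monotonicity of dimension along strict inclusion from an exposed face. -/
lemma fdimZ_lt_of_exposed {P F G : Set (EucSp d)} (hF : IsExposed ℝ P F)
    (hFG : F ⊆ G) (hGP : G ⊆ P) (hne : (G \ F).Nonempty) : fdimZ F < fdimZ G := by
  obtain ⟨y, hyG, hyF⟩ := hne
  have hGne : G ≠ ∅ := fun h => by rw [h] at hyG; exact hyG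
  by_cases hFe : F = ∅
  · rw [fdimZ, fdimZ, if_pos hFe, if_neg hGne]
    exact lt_of_lt_of_le (by norm_num) (Int.natCast_nonneg _)
  · obtain ⟨x0, hx0⟩ := Set.nonempty_iff_ne_empty.2 hFe
    obtain ⟨l, hl⟩ := hF ⟨x0, hx0⟩
    have hx0' : x0 ∈ P ∧ ∀ z ∈ P, l z ≤ l x0 := by rw [hl] at hx0; exact hx0
    -- l is constantly (l x0) on F
    have hconst : ∀ x ∈ F, l x = l x0 := by
      intro x hx
      have hx' : x ∈ P ∧ ∀ z ∈ P, l z ≤ l x := by rw [hl] at hx; exact hx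
      exact le_antisymm (hx0'.2 x hx'.1) (hx'.2 x0 hx0'.1)
    -- l y < l x0
    have hylt : l y < l x0 := by
      rcases lt_or_ge (l y) (l x0) with h | h
      · exact h
      · exfalso; apply hyF; rw [hl]
        exact ⟨hGP hyG, fun z hz => le_trans (hx0'.2 z hz) h⟩
    -- the level set of l at l x0 is an affine subspace
    set S : AffineSubspace ℝ (EucSp d) :=
      AffineSubspace.comap l.toLinearMap.toAffineMap
        (AffineSubspace.mk' (l x0) (⊥ : Submodule ℝ ℝ)) with hSdef
    have hmemS : ∀ z, z ∈ S ↔ l z = l x0 := by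
      intro z
      rw [hSdef, AffineSubspace.mem_comap, AffineSubspace.mem_mk']
      simp [sub_eq_zero]
    have hFleS : affineSpan ℝ F ≤ S := by
      rw [affineSpan_le]
      intro z hz
      show z ∈ S
      exact (hmemS z).2 (hconst z hz)
    have hynotspan : y ∉ affineSpan ℝ F := by
      intro hy
      have := (hmemS y).1 (hFleS hy)
      linarith
    have hlt : affineSpan ℝ F < affineSpan ℝ G := by
      refine lt_of_le_of_ne (affineSpan_mono ℝ hFG) (fun h => hynotspan ?_)
      rw [h]; exact subset_affineSpan ℝ G hyG
    have hdirlt : (affineSpan ℝ F).direction < (affineSpan ℝ G).direction := by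
      apply AffineSubspace.direction_lt_of_nonempty hlt
      rw [affineSpan_nonempty]
      exact Set.nonempty_iff_ne_empty.2 hFe
    have := Submodule.finrank_lt_finrank_of_lt hdirlt
    rw [fdimZ, fdimZ, if_neg hFe, if_neg hGne]
    exact_mod_cast this

lemma neg_one_le_fdimZ (F : Set (EucSp d)) : -1 ≤ fdimZ F := by
  rw [fdimZ]; split_ifs
  · exact le_refl _
  · exact le_trans (by norm_num) (Int.natCast_nonneg _)

lemma fdimZ_empty : fdimZ (∅ : Set (EucSp d)) = -1 := by rw [fdimZ, if_pos rfl]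

/-- Rotating the supporting functional: either we find a strictly larger proper exposed face,
or the rotated functional is constant on `V`. -/
lemma try_rotate (V V1 : Finset (EucSp d)) (hV : V.Nonempty) (hV1 : V1.Nonempty)
    (hV1sub : V1 ⊆ V) (l m : EucSp d →L[ℝ] ℝ) (c μ : ℝ)
    (hlc : ∀ v ∈ V1, l v = c) (hlltc : ∀ v ∈ V, v ∉ V1 → l v < c)
    (hmμ : ∀ v ∈ V1, m v = μ) (hJ : ∃ v ∈ V, v ∉ V1 ∧ μ < m v) :
    (∃ G, IsExposed ℝ (convexHull ℝ (V : Set (EucSp d))) G ∧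
      convexHull ℝ (V1 : Set (EucSp d)) ⊆ G ∧ convexHull ℝ (V1 : Set (EucSp d)) ≠ G ∧
      G ≠ convexHull ℝ (V : Set (EucSp d)))
    ∨ (∃ s : ℝ, 0 < s ∧ ∀ u ∈ V, ∀ v ∈ V, l u + s * m u = l v + s * m v) := by
  set J := V.filter (fun v => v ∉ V1 ∧ μ < m v) with hJdef
  have hJne : J.Nonempty := by
    obtain ⟨v, hv, hv1, hvm⟩ := hJ
    exact ⟨v, by rw [hJdef, Finset.mem_filter]; exact ⟨hv, hv1, hvm⟩⟩
  set g : EucSp d → ℝ := fun v => (c - l v) / (m v - μ) with hgdef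
  set t : ℝ := J.inf' hJne g with htdef
  obtain ⟨vs, hvsJ, hvseq⟩ := Finset.exists_mem_eq_inf' hJne g
  have hvs : vs ∈ V ∧ vs ∉ V1 ∧ μ < m vs := by rwa [hJdef, Finset.mem_filter] at hvsJ
  have ht : 0 < t := by
    rw [htdef, hvseq, hgdef]
    exact div_pos (by linarith [hlltc vs hvs.1 hvs.2.1]) (by linarith [hvs.2.2])
  set L : EucSp d →L[ℝ] ℝ := l + t • m with hLdef
  have hLapp : ∀ v, L v = l v + t * m v := fun v => by rw [hLdef]; simp
  set M : ℝ := c + t * μ with hMdef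
  have hval1 : ∀ v ∈ V1, L v = M := by
    intro v hv; rw [hLapp, hlc v hv, hmμ v hv]
  have hle : ∀ v ∈ V, L v ≤ M := by
    intro v hv
    by_cases h1 : v ∈ V1
    · exact (hval1 v h1).le
    · rw [hLapp]
      by_cases h2 : μ < m v
      · have hvJ : v ∈ J := by rw [hJdef, Finset.mem_filter]; exact ⟨hv, h1, h2⟩
        have htle : t ≤ g v := htdef ▸ Finset.inf'_le g hvJ
        rw [hgdef] at htle
        have := (le_div_iff₀ (by linarith : (0:ℝ) < m v - μ)).mp htle
        rw [hMdef]; nlinarith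
      · have := hlltc v hv h1
        rw [hMdef]; nlinarith [le_of_not_gt h2]
  have hvsM : L vs = M := by
    have hmvs : (0:ℝ) < m vs - μ := by linarith [hvs.2.2]
    have : t * (m vs - μ) = c - l vs := by
      rw [htdef, hvseq, hgdef, div_mul_cancel₀]
      exact ne_of_gt hmvs
    rw [hLapp, hMdef]; nlinarith
  set A := V.filter (fun v => ∀ w ∈ V, L w ≤ L v) with hAdef
  have hA1 : V1 ⊆ A := by
    intro v hv
    rw [hAdef, Finset.mem_filter]
    exact ⟨hV1sub hv, fun w hw => (hle w hw).trans (hval1 v hv).ge⟩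
  have hvsA : vs ∈ A := by
    rw [hAdef, Finset.mem_filter]
    exact ⟨hvs.1, fun w hw => (hle w hw).trans hvsM.ge⟩
  set G := convexHull ℝ (A : Set (EucSp d)) with hGdef
  have hGset : G = {x ∈ convexHull ℝ (V : Set (EucSp d)) |
      ∀ y ∈ convexHull ℝ (V : Set (EucSp d)), L y ≤ L x} := by
    rw [hGdef, hAdef, argmax_hull V hV L]
  have hGexp : IsExposed ℝ (convexHull ℝ (V : Set (EucSp d))) G := fun _ => ⟨L, hGset⟩
  have hFG : convexHull ℝ (V1 : Set (EucSp d)) ⊆ G :=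
    convexHull_mono (by exact_mod_cast hA1)
  have hvsG : vs ∈ G := subset_convexHull ℝ _ (by exact_mod_cast hvsA)
  have hvsF : vs ∉ convexHull ℝ (V1 : Set (EucSp d)) := by
    intro hmem
    have : c ≤ l vs := hull_ge_of_min (fun v hv => (hlc v hv).ge) vs hmem
    linarith [hlltc vs hvs.1 hvs.2.1]
  have hFneG : convexHull ℝ (V1 : Set (EucSp d)) ≠ G := fun h => hvsF (h ▸ hvsG)
  by_cases hAV : ∀ v ∈ V, v ∈ A
  · right
    refine ⟨t, ht, fun u hu v hv => ?_⟩
    have hu' : ∀ w ∈ V, L w ≤ L u := by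
      have := hAV u hu; rw [hAdef, Finset.mem_filter] at this; exact this.2
    have hv' : ∀ w ∈ V, L w ≤ L v := by
      have := hAV v hv; rw [hAdef, Finset.mem_filter] at this; exact this.2
    have : L u = L v := le_antisymm (hv' u hu) (hu' v hv)
    rw [hLapp, hLapp] at this; exact this
  · left
    push_neg at hAV
    obtain ⟨u, hu, huA⟩ := hAV
    have huM : L u < M := by
      rw [hAdef, Finset.mem_filter] at huA
      push_neg at huA
      obtain ⟨w, hw, hwL⟩ := huA hu
      exact lt_of_lt_of_le hwL (hle w hw)
    have huPp : u ∈ convexHull ℝ (V : Set (EucSp d)) := subset_convexHull ℝ _ (by exact_mod_cast hu)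
    have huG : u ∉ G := by
      intro hmem
      rw [hGset] at hmem
      obtain ⟨v1, hv1⟩ := hV1
      have : L v1 ≤ L u := hmem.2 v1 (subset_convexHull ℝ _ (by exact_mod_cast hV1sub hv1))
      rw [hval1 v1 hv1] at this
      linarith
    exact ⟨G, hGexp, hFG, hFneG, fun h => huG (h.symm ▸ huPp)⟩

/-- Key rotation lemma. -/
lemma exists_between_face (V : Finset (EucSp d)) {F : Set (EucSp d)}
    (hF : IsExposed ℝ (convexHull ℝ (V : Set (EucSp d))) F)
    (hdim : fdimZ F + 2 ≤ fdimZ (convexHull ℝ (V : Set (EucSp d)))) :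
    ∃ G, IsExposed ℝ (convexHull ℝ (V : Set (EucSp d))) G ∧ F ⊆ G ∧ F ≠ G ∧
      G ≠ convexHull ℝ (V : Set (EucSp d)) := by
  set Pp := convexHull ℝ (V : Set (EucSp d)) with hPpdef
  have hPpne : Pp.Nonempty := by
    rw [Set.nonempty_iff_ne_empty]
    intro h
    have h1 := neg_one_le_fdimZ F
    rw [h, fdimZ_empty] at hdim
    omega
  have hV : V.Nonempty := by
    rw [← Finset.coe_nonempty, ← convexHull_nonempty_iff (𝕜 := ℝ)]; exact hPpne
  by_cases hFe : F = ∅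
  · -- find any nonempty proper exposed face
    have hdim1 : 1 ≤ fdimZ Pp := by rw [hFe, fdimZ_empty] at hdim; omega
    have hvw : ∃ v ∈ V, ∃ w ∈ V, v ≠ w := by
      by_contra h
      push_neg at h
      obtain ⟨v0, hv0⟩ := hV
      have hVs : (V : Set (EucSp d)) = {v0} := by
        apply Set.eq_singleton_iff_unique_mem.2
        exact ⟨by exact_mod_cast hv0, fun w hw => h w (by exact_mod_cast hw) v0 hv0⟩
      rw [hPpdef, hVs, convexHull_singleton] at hdim1
      rw [fdimZ, if_neg (by simp), direction_affineSpan, vectorSpan_singleton] at hdim1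
      simp [finrank_bot] at hdim1
    obtain ⟨v, hv, w, hw, hvw⟩ := hvw
    set m : EucSp d →L[ℝ] ℝ := innerSL ℝ (v - w) with hmdef
    have hmvw : m w < m v := by
      have hsub : v - w ≠ 0 := sub_ne_zero.2 hvw
      have h0 : (0:ℝ) < ⟪v - w, v - w⟫ := by
        rw [real_inner_self_eq_norm_mul_norm]
        have := norm_pos_iff.2 hsub
        positivity
      have h1 : ⟪v - w, v⟫ - ⟪v - w, w⟫ = ⟪v - w, v - w⟫ := by rw [inner_sub_right]
      have h2 : m v = ⟪v - w, v⟫ := rfl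
      have h3 : m w = ⟪v - w, w⟫ := rfl
      rw [h2, h3]; linarith
    obtain ⟨vmax, hvmax, hmax⟩ := V.exists_max_image m hV
    set A := V.filter (fun x => ∀ y ∈ V, m y ≤ m x) with hAdef
    set G := convexHull ℝ (A : Set (EucSp d)) with hGdef
    have hGset : G = {x ∈ Pp | ∀ y ∈ Pp, m y ≤ m x} := by
      rw [hGdef, hAdef, hPpdef, argmax_hull V hV m]
    have hGexp : IsExposed ℝ Pp G := fun _ => ⟨m, hGset⟩
    have hvmaxA : vmax ∈ A := by
      rw [hAdef, Finset.mem_filter]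
      refine ⟨hvmax, fun y hy => ?_⟩
      exact hull_le_of_max hmax y (subset_convexHull ℝ _ (by exact_mod_cast hy))
    have hGne : G.Nonempty := ⟨vmax, subset_convexHull ℝ _ (by exact_mod_cast hvmaxA)⟩
    have hu : ∃ u ∈ V, m u < m vmax := by
      rcases lt_or_ge (m v) (m vmax) with h | h
      · exact ⟨v, hv, h⟩
      · have heq : m v = m vmax := le_antisymm (hmax v hv) h
        exact ⟨w, hw, by rw [← heq]; exact hmvw⟩
    obtain ⟨u, hu, hum⟩ := hu
    have huPp : u ∈ Pp := subset_convexHull ℝ _ (by exact_mod_cast hu)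
    have huG : u ∉ G := by
      intro hmem
      rw [hGset] at hmem
      have := hmem.2 vmax (subset_convexHull ℝ _ (by exact_mod_cast hvmax))
      linarith
    refine ⟨G, hGexp, by rw [hFe]; exact Set.empty_subset _, ?_, fun h => huG (h.symm ▸ huPp)⟩
    intro h
    rw [hFe] at h
    exact hGne.ne_empty h.symm
  · -- F nonempty
    obtain ⟨l, hl⟩ := hF (Set.nonempty_iff_ne_empty.2 hFe)
    set V1 := V.filter (fun v => ∀ w ∈ V, l w ≤ l v) with hV1def
    have hFV1 : F = convexHull ℝ (V1 : Set (EucSp d)) := by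
      rw [hl, hV1def]; exact argmax_hull V hV l
    have hV1ne : V1.Nonempty := by
      rw [← Finset.coe_nonempty, ← convexHull_nonempty_iff (𝕜 := ℝ), ← hFV1]
      exact Set.nonempty_iff_ne_empty.2 hFe
    have hV1sub : V1 ⊆ V := Finset.filter_subset _ _
    obtain ⟨v1, hv1⟩ := hV1ne
    set c : ℝ := l v1 with hcdef
    have hv1' : v1 ∈ V ∧ ∀ w ∈ V, l w ≤ l v1 := by
      rw [hV1def, Finset.mem_filter] at hv1; exact hv1
    have hlc : ∀ v ∈ V1, l v = c := by
      intro v hv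
      rw [hV1def, Finset.mem_filter] at hv
      exact le_antisymm (hv1'.2 v hv.1) (hv.2 v1 hv1'.1)
    have hlltc : ∀ v ∈ V, v ∉ V1 → l v < c := by
      intro v hv hvn
      rcases lt_or_ge (l v) c with h | h
      · exact h
      · exfalso
        apply hvn
        rw [hV1def, Finset.mem_filter]
        exact ⟨hv, fun w hw => le_trans (hv1'.2 w hw) h⟩
    -- subspace setup
    set W : Submodule ℝ (EucSp d) := (affineSpan ℝ Pp).direction with hWdef
    set D : Submodule ℝ (EucSp d) := (affineSpan ℝ F).direction with hDdef
    have hDW : D ≤ W := AffineSubspace.direction_le (affineSpan_mono ℝ hF.subset)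
    have hrank : Module.finrank ℝ D + 2 ≤ Module.finrank ℝ W := by
      have h1 : fdimZ F = (Module.finrank ℝ D : ℤ) := by rw [fdimZ, if_neg hFe, hDdef]
      have h2 : fdimZ Pp = (Module.finrank ℝ W : ℤ) := by
        rw [fdimZ, if_neg (Set.nonempty_iff_ne_empty.1 hPpne), hWdef]
      rw [h1, h2] at hdim
      omega
    set D' : Submodule ℝ (EucSp d) := Dᗮ ⊓ W with hD'def
    have hrankD' : 2 ≤ Module.finrank ℝ D' := by
      have := Submodule.finrank_add_inf_finrank_orthogonal hDW
      rw [← hD'def] at this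
      omega
    set b := stdOrthonormalBasis ℝ D' with hbdef
    set i0 : Fin (Module.finrank ℝ D') := ⟨0, by omega⟩ with hi0
    set i1 : Fin (Module.finrank ℝ D') := ⟨1, by omega⟩ with hi1
    set w1 : EucSp d := ((b i0 : D') : EucSp d) with hw1def
    set w2 : EucSp d := ((b i1 : D') : EucSp d) with hw2def
    have hw1D' : w1 ∈ D' := (b i0).2
    have hw2D' : w2 ∈ D' := (b i1).2
    have hw1W : w1 ∈ W := (inf_le_right : Dᗮ ⊓ W ≤ W) hw1D'
    have hw2W : w2 ∈ W := (inf_le_right : Dᗮ ⊓ W ≤ W) hw2D'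
    have hw1Dp : w1 ∈ Dᗮ := (inf_le_left : Dᗮ ⊓ W ≤ Dᗮ) hw1D'
    have hw2Dp : w2 ∈ Dᗮ := (inf_le_left : Dᗮ ⊓ W ≤ Dᗮ) hw2D'
    have hip00 : ⟪w1, w1⟫ = 1 := by
      have hn : ‖w1‖ = 1 := b.orthonormal.1 i0
      rw [real_inner_self_eq_norm_mul_norm, hn]; norm_num
    have hip11 : ⟪w2, w2⟫ = 1 := by
      have hn : ‖w2‖ = 1 := b.orthonormal.1 i1
      rw [real_inner_self_eq_norm_mul_norm, hn]; norm_num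
    have hip01 : ⟪w1, w2⟫ = 0 := by
      have h : (inner ℝ (b i0) (b i1) : ℝ) = 0 := b.orthonormal.2 (show i0 ≠ i1 by simp [hi0, hi1, Fin.ext_iff])
      rw [Submodule.coe_inner] at h
      exact h
    set m0 : EucSp d →L[ℝ] ℝ := innerSL ℝ w1 with hm0def
    set m1 : EucSp d →L[ℝ] ℝ := innerSL ℝ w2 with hm1def
    have hm0D : ∀ x ∈ D, m0 x = 0 := by
      intro x hx
      rw [hm0def]
      simp only [innerSL_apply_apply]
      rw [real_inner_comm]
      exact (Submodule.mem_orthogonal D w1).1 hw1Dp x hx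
    have hm1D : ∀ x ∈ D, m1 x = 0 := by
      intro x hx
      rw [hm1def]
      simp only [innerSL_apply_apply]
      rw [real_inner_comm]
      exact (Submodule.mem_orthogonal D w2).1 hw2Dp x hx
    have hV1F : (V1 : Set (EucSp d)) ⊆ F := by rw [hFV1]; exact subset_convexHull ℝ _
    have hconstF : ∀ (mm : EucSp d →L[ℝ] ℝ), (∀ x ∈ D, mm x = 0) →
        ∀ u ∈ V1, ∀ v ∈ V1, mm u = mm v := by
      intro mm hmm u hu v hv
      have hu' : (u : EucSp d) ∈ affineSpan ℝ F := subset_affineSpan ℝ F (hV1F (by exact_mod_cast hu))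
      have hv' : (v : EucSp d) ∈ affineSpan ℝ F := subset_affineSpan ℝ F (hV1F (by exact_mod_cast hv))
      have hd : u - v ∈ D := by
        rw [hDdef]
        exact AffineSubspace.vsub_mem_direction hu' hv'
      have := hmm _ hd
      rw [map_sub] at this
      linarith
    -- vanishing on W from constancy on V
    have hWker : ∀ (N : EucSp d →L[ℝ] ℝ), (∀ u ∈ V, ∀ v ∈ V, N u = N v) →
        ∀ x ∈ W, N x = 0 := by
      intro N hN x hx
      have hWv : W = vectorSpan ℝ (V : Set (EucSp d)) := by
        rw [hWdef, hPpdef, affineSpan_convexHull, direction_affineSpan]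
      rw [hWv, vectorSpan_def] at hx
      have hle : Submodule.span ℝ ((V : Set (EucSp d)) -ᵥ (V : Set (EucSp d)))
          ≤ LinearMap.ker (N : EucSp d →ₗ[ℝ] ℝ) := by
        rw [Submodule.span_le]
        rintro z ⟨u, hu, v, hv, rfl⟩
        have : N (u - v) = 0 := by
          rw [map_sub, hN u (by exact_mod_cast hu) v (by exact_mod_cast hv)]; ring
        simpa using this
      have := hle hx
      simpa using this
    -- the key dichotomy
    have key : ∀ (mm : EucSp d →L[ℝ] ℝ), (∀ u ∈ V1, ∀ v ∈ V1, mm u = mm v) →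
        (∃ G, IsExposed ℝ Pp G ∧ F ⊆ G ∧ F ≠ G ∧ G ≠ Pp) ∨
        (∃ α : ℝ, ∀ x ∈ W, mm x = α * l x) := by
      intro mm hconst
      set μ : ℝ := mm v1 with hμdef
      have hmmV1 : ∀ v ∈ V1, mm v = μ := fun v hv => hconst v hv v1 hv1
      by_cases hp : ∃ v ∈ V, v ∉ V1 ∧ μ < mm v
      · rcases try_rotate V V1 hV ⟨v1, hv1⟩ hV1sub l mm c μ hlc hlltc hmmV1 hp with
          ⟨G, hGexp, hsub, hne, hnePp⟩ | ⟨s, hs, hcst⟩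
        · left
          exact ⟨G, hGexp, hFV1 ▸ hsub, hFV1 ▸ hne, hnePp⟩
        · right
          refine ⟨-(1/s), fun x hx => ?_⟩
          have := hWker (l + s • mm) (fun u hu v hv => by simpa using hcst u hu v hv) x hx
          simp only [ContinuousLinearMap.add_apply, ContinuousLinearMap.coe_smul',
            Pi.smul_apply, smul_eq_mul] at this
          field_simp
          linarith [this]
      · by_cases hq : ∃ v ∈ V, v ∉ V1 ∧ mm v < μ
        · have hq' : ∃ v ∈ V, v ∉ V1 ∧ -μ < (-mm) v := by
            obtain ⟨v, hv, hvn, hvm⟩ := hq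
            exact ⟨v, hv, hvn, by simpa using neg_lt_neg hvm⟩
          rcases try_rotate V V1 hV ⟨v1, hv1⟩ hV1sub l (-mm) c (-μ) hlc hlltc
            (fun v hv => by rw [ContinuousLinearMap.neg_apply, hmmV1 v hv]) hq' with
            ⟨G, hGexp, hsub, hne, hnePp⟩ | ⟨s, hs, hcst⟩
          · left
            exact ⟨G, hGexp, hFV1 ▸ hsub, hFV1 ▸ hne, hnePp⟩
          · right
            refine ⟨1/s, fun x hx => ?_⟩
            have := hWker (l - s • mm) (fun u hu v hv => by
              have := hcst u hu v hv
              simp only [ContinuousLinearMap.neg_apply] at this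
              simp only [ContinuousLinearMap.sub_apply, ContinuousLinearMap.coe_smul',
                Pi.smul_apply, smul_eq_mul]
              linarith) x hx
            simp only [ContinuousLinearMap.sub_apply, ContinuousLinearMap.coe_smul',
              Pi.smul_apply, smul_eq_mul] at this
            field_simp
            linarith [this]
        · -- mm constant on all of V
          push_neg at hp hq
          have hall : ∀ u ∈ V, ∀ v ∈ V, mm u = mm v := by
            have hval : ∀ v ∈ V, mm v = μ := by
              intro v hv
              by_cases h1 : v ∈ V1
              · exact hmmV1 v h1
              · exact le_antisymm (hp v hv h1) (hq v hv h1)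
            intro u hu v hv
            rw [hval u hu, hval v hv]
          right
          refine ⟨0, fun x hx => ?_⟩
          rw [hWker mm hall x hx]; ring
    rcases key m0 (hconstF m0 hm0D) with res | ⟨α, hα⟩
    · exact res
    rcases key m1 (hconstF m1 hm1D) with res | ⟨β, hβ⟩
    · exact res
    -- final contradiction
    exfalso
    set u0 : EucSp d := β • w1 - α • w2 with hu0def
    have hu0W : u0 ∈ W := Submodule.sub_mem _ (Submodule.smul_mem _ _ hw1W)
      (Submodule.smul_mem _ _ hw2W)
    have e0 : m0 u0 = β := by
      rw [hm0def, hu0def]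
      simp only [innerSL_apply_apply]
      rw [inner_sub_right, real_inner_smul_right, real_inner_smul_right, hip00, hip01]
      ring
    have e1 : m1 u0 = -α := by
      rw [hm1def, hu0def]
      simp only [innerSL_apply_apply]
      rw [inner_sub_right, real_inner_smul_right, real_inner_smul_right, hip11,
        real_inner_comm w1 w2, hip01]
      ring
    have h1 : β = α * l u0 := by rw [← e0]; exact hα u0 hu0W
    have h2 : -α = β * l u0 := by rw [← e1]; exact hβ u0 hu0W
    have e3 : β * β = (α * l u0) * β := congrArg (fun t => t * β) h1
    have e4 : -α * α = (β * l u0) * α := congrArg (fun t => t * α) h2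
    have e34 : (α * l u0) * β = (β * l u0) * α := by ring
    have e5 : α * α ≤ 0 := by linarith [mul_self_nonneg β]
    have hzero : α = 0 := mul_self_eq_zero.mp (le_antisymm e5 (mul_self_nonneg α))
    have := hα w1 hw1W
    rw [hzero] at this
    have hm0w1 : m0 w1 = 1 := by rw [hm0def]; simpa [innerSL_apply_apply] using hip00
    rw [hm0w1] at this
    linarith

lemma face_eq_hull (V : Finset (EucSp d)) (hV : V.Nonempty) {A : Set (EucSp d)}
    (hA : IsExposed ℝ (convexHull ℝ (V : Set (EucSp d))) A) (hne : A.Nonempty) :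
    ∃ V0 : Finset (EucSp d), V0 ⊆ V ∧ A = convexHull ℝ (V0 : Set (EucSp d)) := by
  obtain ⟨l, hl⟩ := hA hne
  exact ⟨V.filter (fun v => ∀ w ∈ V, l w ≤ l v), Finset.filter_subset _ _,
    by rw [hl]; exact argmax_hull V hV l⟩

lemma chain_step : ∀ (n : ℕ) (V : Finset (EucSp d)) (F : Set (EucSp d)),
    (fdimZ (convexHull ℝ (V : Set (EucSp d))) - fdimZ F).toNat ≤ n →
    IsExposed ℝ (convexHull ℝ (V : Set (EucSp d))) F →
    fdimZ F + 2 ≤ fdimZ (convexHull ℝ (V : Set (EucSp d))) →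
    ∃ G, IsExposed ℝ (convexHull ℝ (V : Set (EucSp d))) G ∧ F ⊆ G ∧ F ≠ G ∧
      G ≠ convexHull ℝ (V : Set (EucSp d)) ∧ fdimZ G ≤ fdimZ F + 1 := by
  intro n
  induction n with
  | zero => intro V F hm hF hdim; omega
  | succ n ih =>
    intro V F hmeas hF hdim
    obtain ⟨G0, hG0exp, hFG0, hFneG0, hG0nePp⟩ := exists_between_face V hF hdim
    by_cases hdimG0 : fdimZ G0 ≤ fdimZ F + 1
    · exact ⟨G0, hG0exp, hFG0, hFneG0, hG0nePp, hdimG0⟩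
    · have hdim2 : fdimZ F + 2 ≤ fdimZ G0 := by omega
      have hG0ne : G0.Nonempty := by
        rw [Set.nonempty_iff_ne_empty]
        intro h
        rw [h, fdimZ_empty] at hdim2
        have := neg_one_le_fdimZ F
        omega
      have hV : V.Nonempty := by
        rw [← Finset.coe_nonempty, ← convexHull_nonempty_iff (𝕜 := ℝ)]
        exact ⟨_, hG0exp.subset hG0ne.choose_spec⟩
      obtain ⟨V0, hV0sub, hG0eq⟩ := face_eq_hull V hV hG0exp hG0ne
      have hFG0exp : IsExposed ℝ G0 F := exposed_of_between hF hFG0 hG0exp.subset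
      have hlt : fdimZ G0 < fdimZ (convexHull ℝ (V : Set (EucSp d))) := by
        apply fdimZ_lt_of_exposed hG0exp hG0exp.subset (Set.Subset.refl _)
        rw [Set.diff_nonempty]
        exact fun hsub => hG0nePp (Set.Subset.antisymm hG0exp.subset hsub)
      have hmeas2 : (fdimZ (convexHull ℝ (V0 : Set (EucSp d))) - fdimZ F).toNat ≤ n := by
        rw [← hG0eq]; omega
      obtain ⟨G, hGexp, hFG, hFneG, hGneG0, hdimG⟩ :=
        ih V0 F hmeas2 (by rw [← hG0eq]; exact hFG0exp) (by rw [← hG0eq]; exact hdim2)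
      rw [← hG0eq] at hGexp hGneG0
      refine ⟨G, exposed_trans V hG0exp hGexp, hFG, hFneG, ?_, hdimG⟩
      intro h
      apply hG0nePp
      refine Set.Subset.antisymm hG0exp.subset ?_
      rw [← h]
      exact hGexp.subset

/-- a two-step strictly increasing chain of proper exposed faces above a face of
codimension at least 3. -/
lemma three_chain (V : Finset (EucSp d)) {F : Set (EucSp d)}
    (hF : IsExposed ℝ (convexHull ℝ (V : Set (EucSp d))) F)
    (hdim : fdimZ F + 3 ≤ fdimZ (convexHull ℝ (V : Set (EucSp d)))) :
    ∃ G1 G2 : Set (EucSp d), IsExposed ℝ (convexHull ℝ (V : Set (EucSp d))) G1 ∧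
      IsExposed ℝ (convexHull ℝ (V : Set (EucSp d))) G2 ∧
      F ⊆ G1 ∧ F ≠ G1 ∧ G1 ⊆ G2 ∧ G1 ≠ G2 ∧ G2 ≠ convexHull ℝ (V : Set (EucSp d)) := by
  obtain ⟨G1, hG1exp, hFG1, hFneG1, hG1nePp, hdimG1⟩ :=
    chain_step (fdimZ (convexHull ℝ (V : Set (EucSp d))) - fdimZ F).toNat V F le_rfl hF
      (by omega)
  obtain ⟨G2, hG2exp, hG1G2, hG1neG2, hG2nePp⟩ :=
    exists_between_face V hG1exp (by omega)
  exact ⟨G1, G2, hG1exp, hG2exp, hFG1, hFneG1, hG1G2, hG1neG2, hG2nePp⟩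

lemma exposed_self {A : Set (EucSp d)} : IsExposed ℝ A A :=
  fun _ => ⟨0, by ext x; simp⟩

lemma tile_fdim (T : Tiling d) {Q : Set (EucSp d)} (hQ : Q ∈ T.tiles) : fdimZ Q = d := by
  obtain ⟨⟨V, hV⟩, hint⟩ := T.polytope Q hQ
  have hconv : Convex ℝ Q := by rw [hV]; exact convex_convexHull ℝ _
  have hspan : affineSpan ℝ Q = ⊤ := hconv.interior_nonempty_iff_affineSpan_eq_top.1 hint
  have hQne : Q ≠ ∅ := by
    intro h
    rw [h] at hint
    simp at hint
  rw [fdimZ, if_neg hQne, hspan, AffineSubspace.direction_top]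
  norm_num [finrank_top]

lemma tile_int_nonempty (T : Tiling d) {Q : Set (EucSp d)} (hQ : Q ∈ T.tiles) :
    (interior Q).Nonempty := (T.polytope Q hQ).2

lemma tile_subset_eq (T : Tiling d) {Q R : Set (EucSp d)} (hQ : Q ∈ T.tiles)
    (hR : R ∈ T.tiles) (h : Q ⊆ R) : Q = R := by
  by_contra hne
  obtain ⟨x, hx⟩ := tile_int_nonempty T hQ
  have hdisj := T.disjointInteriors Q hQ R hR hne
  have : x ∈ interior Q ∩ interior R := ⟨hx, interior_mono h hx⟩
  rw [hdisj] at this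
  exact this

lemma tileChain_trunc {T : Tiling d} {P : Set (EucSp d)} {m : ℕ} {f : ℕ → Set (EucSp d)}
    (h0 : f 0 = P) (htiles : ∀ j ≤ m, f j ∈ T.tiles)
    (hadj : ∀ j, 1 ≤ j → j ≤ m → (d : ℤ) - 2 ≤ fdimZ (f (j - 1) ∩ f j))
    {j : ℕ} (hj : j ≤ m) : TileChain T P (f j) j :=
  ⟨f, h0, rfl, fun i hi => htiles i (hi.trans hj), fun i h1 h2 => hadj i h1 (h2.trans hj)⟩

lemma tileDist_le_of_chain {T : Tiling d} {P Q : Set (EucSp d)} {m : ℕ}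
    (h : TileChain T P Q m) : tileDist T P Q ≤ (m : ℕ∞) :=
  sInf_le ⟨m, rfl, h⟩

lemma tileDist_le_iff {T : Tiling d} {P Q : Set (EucSp d)} {k : ℕ} :
    tileDist T P Q ≤ (k : ℕ∞) ↔ ∃ m : ℕ, m ≤ k ∧ TileChain T P Q m := by
  constructor
  · intro h
    set S := {n : ℕ∞ | ∃ m : ℕ, n = (m : ℕ∞) ∧ TileChain T P Q m} with hS
    rcases Set.eq_empty_or_nonempty S with hSe | hSne
    · exfalso
      rw [tileDist, ← hS, hSe, sInf_empty] at h
      exact ENat.coe_ne_top k (top_le_iff.mp h).symm.symm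
    · have hmem : sInf S ∈ S := csInf_mem hSne
      obtain ⟨m, hm, hchain⟩ := hmem
      refine ⟨m, ?_, hchain⟩
      rw [tileDist, ← hS, hm] at h
      exact_mod_cast h
  · rintro ⟨m, hm, hchain⟩
    exact le_trans (tileDist_le_of_chain hchain) (by exact_mod_cast hm)

lemma tileDist_self {T : Tiling d} {P : Set (EucSp d)} (hP : P ∈ T.tiles) {k : ℕ} :
    tileDist T P P ≤ (k : ℕ∞) :=
  tileDist_le_iff.2 ⟨0, Nat.zero_le _, ⟨fun _ => P, rfl, rfl, fun _ _ => hP,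
    fun j h1 h2 => absurd (h1.trans h2) (by omega)⟩⟩

lemma mem_corona_self {T : Tiling d} {P : Set (EucSp d)} (hP : P ∈ T.tiles) {k : ℕ} :
    P ∈ corona T k P := ⟨P, hP, tileDist_self hP, exposed_self⟩

lemma corona_mono {T : Tiling d} {P : Set (EucSp d)} {j k : ℕ} (hjk : j ≤ k) :
    corona T j P ⊆ corona T k P := by
  rintro F ⟨Q, hQ, hdist, hface⟩
  exact ⟨Q, hQ, le_trans hdist (by exact_mod_cast hjk), hface⟩

lemma corona_face_of_subset {T : Tiling d} {k : ℕ} {P F R : Set (EucSp d)}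
    (hF : F ∈ corona T k P) (hR : R ∈ T.tiles) (hFR : F ⊆ R) : IsFaceOf F R := by
  obtain ⟨S, hS, _, hFS⟩ := hF
  obtain ⟨⟨V, hV⟩, _⟩ := T.polytope R hR
  have h1 : IsExposed ℝ (S ∩ R) F :=
    exposed_of_between hFS (Set.subset_inter hFS.subset hFR) Set.inter_subset_left
  have h2 : IsExposed ℝ R (S ∩ R) := (T.faceToFace S hS R hR).2
  rw [hV] at h1 h2 ⊢
  exact exposed_trans V h2 h1

lemma tile_maximal {T : Tiling d} {k : ℕ} {P Q G : Set (EucSp d)}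
    (hQ : Q ∈ T.tiles) (hG : G ∈ corona T k P) (hQG : Q ⊆ G) : G = Q := by
  obtain ⟨R, hR, _, hGR⟩ := hG
  have hQR : Q = R := tile_subset_eq T hQ hR (hQG.trans hGR.subset)
  exact Set.Subset.antisymm (hQR ▸ hGR.subset) hQG

lemma maximal_tile {T : Tiling d} {k : ℕ} {P G : Set (EucSp d)}
    (hG : G ∈ corona T k P) (hmax : ∀ H ∈ corona T k P, G ⊆ H → H = G) :
    G ∈ T.tiles ∧ tileDist T P G ≤ (k : ℕ∞) := by
  obtain ⟨R, hR, hdist, hGR⟩ := hG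
  have hRmem : R ∈ corona T k P := ⟨R, hR, hdist, exposed_self⟩
  have := hmax R hRmem hGR.subset
  subst this
  exact ⟨hR, hdist⟩

/-- dimension `≥ d-2` of a face is characterized by absence of length-3 chains. -/
lemma dim_iff_nochain (T : Tiling d) {k : ℕ} {P Q F : Set (EucSp d)}
    (hQ : Q ∈ T.tiles) (hdist : tileDist T P Q ≤ (k : ℕ∞)) (hF : IsFaceOf F Q) :
    ((d : ℤ) - 2 ≤ fdimZ F) ↔
    ¬∃ G1, G1 ∈ corona T k P ∧ ∃ G2, G2 ∈ corona T k P ∧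
      (F ⊆ G1 ∧ F ≠ G1) ∧ (G1 ⊆ G2 ∧ G1 ≠ G2) ∧ (G2 ⊆ Q ∧ G2 ≠ Q) := by
  constructor
  · rintro hdim ⟨G1, hG1, G2, hG2, ⟨h1s, h1n⟩, ⟨h2s, h2n⟩, ⟨h3s, h3n⟩⟩
    have hG1Q : IsFaceOf G1 Q := corona_face_of_subset hG1 hQ (h2s.trans h3s)
    have hG2Q : IsFaceOf G2 Q := corona_face_of_subset hG2 hQ h3s
    have d1 : fdimZ F < fdimZ G1 := by
      apply fdimZ_lt_of_exposed hF h1s (h2s.trans h3s)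
      rw [Set.diff_nonempty]
      exact fun hsub => h1n (Set.Subset.antisymm h1s hsub)
    have d2 : fdimZ G1 < fdimZ G2 := by
      apply fdimZ_lt_of_exposed hG1Q h2s h3s
      rw [Set.diff_nonempty]
      exact fun hsub => h2n (Set.Subset.antisymm h2s hsub)
    have d3 : fdimZ G2 < fdimZ Q := by
      apply fdimZ_lt_of_exposed hG2Q h3s (Set.Subset.refl Q)
      rw [Set.diff_nonempty]
      exact fun hsub => h3n (Set.Subset.antisymm h3s hsub)
    have := tile_fdim T hQ
    omega
  · intro hno
    by_contra hdim
    apply hno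
    obtain ⟨⟨V, hV⟩, _⟩ := T.polytope Q hQ
    have hFV : IsExposed ℝ (convexHull ℝ (V : Set (EucSp d))) F := by rw [← hV]; exact hF
    have hdim3 : fdimZ F + 3 ≤ fdimZ (convexHull ℝ (V : Set (EucSp d))) := by
      rw [← hV, tile_fdim T hQ]
      omega
    obtain ⟨G1, G2, hG1e, hG2e, hs1, hn1, hs2, hn2, hn3⟩ := three_chain V hFV hdim3
    rw [← hV] at hG1e hG2e hn3
    exact ⟨G1, ⟨Q, hQ, hdist, hG1e⟩, G2, ⟨Q, hQ, hdist, hG2e⟩,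
      ⟨hs1, hn1⟩, ⟨hs2, hn2⟩, ⟨hG2e.subset, hn3⟩⟩

lemma symm_centered {T : Tiling d} {k : ℕ} {P P' : Set (EucSp d)}
    (e : ↥(corona T k P) ≃o ↥(corona T k P')) (he : IsCenteredIso T k P P' e) :
    IsCenteredIso T k P' P e.symm := by
  intro hP' hP
  have := he hP hP'
  rw [← this, OrderIso.symm_apply_apply]

lemma iso_image_tile {T : Tiling d} {k : ℕ} {P P' : Set (EucSp d)}
    (e : ↥(corona T k P) ≃o ↥(corona T k P')) {S : Set (EucSp d)}
    (hS : S ∈ T.tiles) (hSc : S ∈ corona T k P) :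
    (e ⟨S, hSc⟩ : Set (EucSp d)) ∈ T.tiles ∧
      tileDist T P' (e ⟨S, hSc⟩ : Set (EucSp d)) ≤ (k : ℕ∞) := by
  apply maximal_tile (e ⟨S, hSc⟩).2
  intro H hH hsub
  have h1 : e ⟨S, hSc⟩ ≤ ⟨H, hH⟩ := hsub
  have h2 : (⟨S, hSc⟩ : ↥(corona T k P)) ≤ e.symm ⟨H, hH⟩ := by
    have := e.symm.monotone h1
    rwa [OrderIso.symm_apply_apply] at this
  have h3 : S ⊆ (e.symm ⟨H, hH⟩ : Set (EucSp d)) := h2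
  have h4 : ((e.symm ⟨H, hH⟩ : Set (EucSp d))) = S :=
    tile_maximal hS (e.symm ⟨H, hH⟩).2 h3
  have h5 : e.symm ⟨H, hH⟩ = ⟨S, hSc⟩ := Subtype.ext h4
  calc H = ((e (e.symm ⟨H, hH⟩)) : Set (EucSp d)) := by rw [OrderIso.apply_symm_apply]
  _ = ((e ⟨S, hSc⟩ : Set (EucSp d))) := by rw [h5]

lemma iso_meet {T : Tiling d} {k : ℕ} {P P' : Set (EucSp d)}
    (e : ↥(corona T k P) ≃o ↥(corona T k P')) {S1 S2 : Set (EucSp d)}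
    (h1 : S1 ∈ T.tiles) (h2 : S2 ∈ T.tiles)
    (c1 : S1 ∈ corona T k P) (c2 : S2 ∈ corona T k P) (hm : S1 ∩ S2 ∈ corona T k P) :
    ((e ⟨S1 ∩ S2, hm⟩ : Set (EucSp d))) = (e ⟨S1, c1⟩ : Set (EucSp d)) ∩ (e ⟨S2, c2⟩ : Set (EucSp d)) := by
  obtain ⟨himg1, hd1⟩ := iso_image_tile e h1 c1
  obtain ⟨himg2, hd2⟩ := iso_image_tile e h2 c2
  apply Set.Subset.antisymm
  · apply Set.subset_inter
    · exact e.monotone (show (⟨S1 ∩ S2, hm⟩ : ↥(corona T k P)) ≤ ⟨S1, c1⟩ from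
        Set.inter_subset_left)
    · exact e.monotone (show (⟨S1 ∩ S2, hm⟩ : ↥(corona T k P)) ≤ ⟨S2, c2⟩ from
        Set.inter_subset_right)
  · set M' : Set (EucSp d) := (e ⟨S1, c1⟩ : Set (EucSp d)) ∩ (e ⟨S2, c2⟩ : Set (EucSp d)) with hM'def
    have hM'mem : M' ∈ corona T k P' :=
      ⟨(e ⟨S2, c2⟩ : Set (EucSp d)), himg2, hd2, (T.faceToFace _ himg1 _ himg2).2⟩
    have hle1 : (⟨M', hM'mem⟩ : ↥(corona T k P')) ≤ e ⟨S1, c1⟩ := Set.inter_subset_left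
    have hle2 : (⟨M', hM'mem⟩ : ↥(corona T k P')) ≤ e ⟨S2, c2⟩ := Set.inter_subset_right
    have hs1 : e.symm ⟨M', hM'mem⟩ ≤ ⟨S1, c1⟩ := by
      have := e.symm.monotone hle1
      rwa [OrderIso.symm_apply_apply] at this
    have hs2 : e.symm ⟨M', hM'mem⟩ ≤ ⟨S2, c2⟩ := by
      have := e.symm.monotone hle2
      rwa [OrderIso.symm_apply_apply] at this
    have hsub : (e.symm ⟨M', hM'mem⟩ : Set (EucSp d)) ⊆ S1 ∩ S2 := Set.subset_inter hs1 hs2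
    have hfin : (⟨M', hM'mem⟩ : ↥(corona T k P')) ≤ e ⟨S1 ∩ S2, hm⟩ := by
      have := e.monotone (show e.symm ⟨M', hM'mem⟩ ≤ ⟨S1 ∩ S2, hm⟩ from hsub)
      rwa [OrderIso.apply_symm_apply] at this
    exact hfin

lemma corona_transport (T : Tiling d) (k : ℕ) (hk : 1 ≤ k) {P P' : Set (EucSp d)}
    (hP : P ∈ T.tiles) (hP' : P' ∈ T.tiles)
    (e : ↥(corona T k P) ≃o ↥(corona T k P')) (he : IsCenteredIso T k P P' e)
    {F : Set (EucSp d)} (hFm : F ∈ corona T (k - 1) P) (hFk : F ∈ corona T k P) :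
    (e ⟨F, hFk⟩ : Set (EucSp d)) ∈ corona T (k - 1) P' := by
  obtain ⟨Q, hQ, hdist, hFQ⟩ := hFm
  obtain ⟨m, hm, f, h0, hlast, htiles, hadj⟩ := tileDist_le_iff.1 hdist
  have hmk : m ≤ k := hm.trans (Nat.sub_le k 1)
  -- memberships of the chain tiles in the k-th corona
  have hmem : ∀ j, j ≤ m → f j ∈ corona T k P := by
    intro j hj
    refine ⟨f j, htiles j hj, ?_, exposed_self⟩
    refine le_trans (tileDist_le_of_chain (tileChain_trunc h0 htiles hadj hj)) ?_
    exact_mod_cast hj.trans hmk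
  have himg : ∀ j (hj : j ≤ m), (e ⟨f j, hmem j hj⟩ : Set (EucSp d)) ∈ T.tiles ∧
      tileDist T P' (e ⟨f j, hmem j hj⟩ : Set (EucSp d)) ≤ (k : ℕ∞) :=
    fun j hj => iso_image_tile e (htiles j hj) (hmem j hj)
  -- the image chain
  set f' : ℕ → Set (EucSp d) :=
    fun j => if h : j ≤ m then (e ⟨f j, hmem j h⟩ : Set (EucSp d)) else P' with hf'def
  have hf'eq : ∀ j (hj : j ≤ m), f' j = (e ⟨f j, hmem j hj⟩ : Set (EucSp d)) := by
    intro j hj; rw [hf'def]; simp [hj]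
  have hchain' : TileChain T P' (f' m) m := by
    refine ⟨f', ?_, rfl, ?_, ?_⟩
    · rw [hf'eq 0 (Nat.zero_le m)]
      have hPmem : P ∈ corona T k P := mem_corona_self hP
      have hP'mem : P' ∈ corona T k P' := mem_corona_self hP'
      have : (⟨f 0, hmem 0 (Nat.zero_le m)⟩ : ↥(corona T k P)) = ⟨P, hPmem⟩ :=
        Subtype.ext h0
      rw [this, he hPmem hP'mem]
    · intro j hj
      rw [hf'eq j hj]
      exact (himg j hj).1
    · intro j h1 hj
      have hj1 : j - 1 ≤ m := le_trans (Nat.sub_le j 1) hj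
      rw [hf'eq (j-1) hj1, hf'eq j hj]
      set S1 := f (j - 1) with hS1def
      set S2 := f j with hS2def
      have hS1t : S1 ∈ T.tiles := htiles _ hj1
      have hS2t : S2 ∈ T.tiles := htiles _ hj
      set M := S1 ∩ S2 with hMdef
      have hMface : IsFaceOf M S2 := (T.faceToFace S1 hS1t S2 hS2t).2
      have hS2dist : tileDist T P S2 ≤ (k : ℕ∞) := by
        refine le_trans (tileDist_le_of_chain (tileChain_trunc h0 htiles hadj hj)) ?_
        exact_mod_cast hj.trans hmk
      have hMmem : M ∈ corona T k P := ⟨S2, hS2t, hS2dist, hMface⟩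
      have hMeet : (e ⟨M, hMmem⟩ : Set (EucSp d)) =
          (e ⟨S1, hmem _ hj1⟩ : Set (EucSp d)) ∩ (e ⟨S2, hmem _ hj⟩ : Set (EucSp d)) :=
        iso_meet e hS1t hS2t (hmem _ hj1) (hmem _ hj) hMmem
      rw [← hMeet]
      -- transport the dimension bound through the no-chain characterization
      have hdimM : (d : ℤ) - 2 ≤ fdimZ M := hadj j h1 hj
      have hno := (dim_iff_nochain T hS2t hS2dist hMface).1 hdimM
      obtain ⟨hS2't, hS2'dist⟩ := himg j hj
      obtain ⟨hS1't, _⟩ := himg (j-1) hj1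
      have hM'face : IsFaceOf (e ⟨M, hMmem⟩ : Set (EucSp d)) (e ⟨f j, hmem j hj⟩ : Set (EucSp d)) := by
        rw [hMeet]
        exact (T.faceToFace _ hS1't _ hS2't).2
      refine (dim_iff_nochain T hS2't hS2'dist hM'face).2 ?_
      rintro ⟨G1', c1', G2', c2', ⟨s1, n1⟩, ⟨s2, n2⟩, ⟨s3, n3⟩⟩
      apply hno
      set x1 := e.symm ⟨G1', c1'⟩ with hx1def
      set x2 := e.symm ⟨G2', c2'⟩ with hx2def
      have hMx1 : (⟨M, hMmem⟩ : ↥(corona T k P)) ≤ x1 := by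
        have h := e.symm.monotone (show e ⟨M, hMmem⟩ ≤ ⟨G1', c1'⟩ from s1)
        rwa [OrderIso.symm_apply_apply] at h
      have hx1x2 : x1 ≤ x2 := e.symm.monotone (show (⟨G1', c1'⟩ : ↥(corona T k P')) ≤ ⟨G2', c2'⟩ from s2)
      have hx2S2 : x2 ≤ ⟨S2, hmem _ hj⟩ := by
        have h := e.symm.monotone (show (⟨G2', c2'⟩ : ↥(corona T k P')) ≤ e ⟨S2, hmem _ hj⟩ from s3)
        rwa [OrderIso.symm_apply_apply] at h
      refine ⟨(x1 : Set (EucSp d)), x1.2, (x2 : Set (EucSp d)), x2.2,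
        ⟨hMx1, ?_⟩, ⟨hx1x2, ?_⟩, ⟨hx2S2, ?_⟩⟩
      · intro hEq
        apply n1
        have : (⟨M, hMmem⟩ : ↥(corona T k P)) = x1 := Subtype.ext hEq
        rw [this, hx1def, OrderIso.apply_symm_apply]
      · intro hEq
        apply n2
        have : x1 = x2 := Subtype.ext hEq
        rw [hx1def, hx2def] at this
        have := congrArg e this
        rw [OrderIso.apply_symm_apply, OrderIso.apply_symm_apply] at this
        exact congrArg Subtype.val this
      · intro hEq
        apply n3
        have : x2 = ⟨S2, hmem _ hj⟩ := Subtype.ext hEq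
        rw [hx2def] at this
        have := congrArg e this
        rw [OrderIso.apply_symm_apply] at this
        exact congrArg Subtype.val this
  -- conclude
  have hdist' : tileDist T P' (f' m) ≤ ((k - 1 : ℕ) : ℕ∞) :=
    tileDist_le_iff.2 ⟨m, hm, hchain'⟩
  have hFQ' : (e ⟨F, hFk⟩ : Set (EucSp d)) ⊆ f' m := by
    rw [hf'eq m le_rfl]
    exact e.monotone (show (⟨F, hFk⟩ : ↥(corona T k P)) ≤ ⟨f m, hmem m le_rfl⟩ from by
      show F ⊆ f m
      rw [hlast]
      exact hFQ.subset)
  have hf'mt : f' m ∈ T.tiles := by rw [hf'eq m le_rfl]; exact (himg m le_rfl).1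
  exact ⟨f' m, hf'mt, hdist', corona_face_of_subset (e ⟨F, hFk⟩).2 hf'mt hFQ'⟩

end AuxCorona

/-- If the centered `k`-th coronas of two tiles are isomorphic then so are their centered
`(k-1)`-st coronas; consequently `N_{k-1}(T) ≤ N_k(T)`. -/
theorem coronasIsomorphic_mono (d : ℕ) (T : Tiling d) (k : ℕ) (hk : 1 ≤ k) :
    (∀ P ∈ T.tiles, ∀ P' ∈ T.tiles,
      CoronasIsomorphic T k P P' → CoronasIsomorphic T (k - 1) P P') ∧
    Ncount T (k - 1) ≤ Ncount T k := by
  have part1 : ∀ P ∈ T.tiles, ∀ P' ∈ T.tiles,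
      CoronasIsomorphic T k P P' → CoronasIsomorphic T (k - 1) P P' := by
    rintro P hP P' hP' ⟨e, he⟩
    have hsub : corona T (k - 1) P ⊆ corona T k P := corona_mono (Nat.sub_le k 1)
    have hsub' : corona T (k - 1) P' ⊆ corona T k P' := corona_mono (Nat.sub_le k 1)
    have hesymm := symm_centered e he
    refine ⟨{
      toFun := fun x => ⟨(e ⟨x.1, hsub x.2⟩ : Set (EucSp d)),
        corona_transport T k hk hP hP' e he x.2 (hsub x.2)⟩
      invFun := fun y => ⟨(e.symm ⟨y.1, hsub' y.2⟩ : Set (EucSp d)),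
        corona_transport T k hk hP' hP e.symm hesymm y.2 (hsub' y.2)⟩
      left_inv := ?_
      right_inv := ?_
      map_rel_iff' := ?_ }, ?_⟩
    · intro x
      apply Subtype.ext
      show ((e.symm ⟨((e ⟨x.1, hsub x.2⟩ : Set (EucSp d))), _⟩ : Set (EucSp d))) = x.1
      have h1 : (⟨((e ⟨x.1, hsub x.2⟩ : Set (EucSp d))), _⟩ : ↥(corona T k P')) =
          e ⟨x.1, hsub x.2⟩ := Subtype.ext rfl
      rw [h1, OrderIso.symm_apply_apply]
    · intro y
      apply Subtype.ext
      show ((e ⟨((e.symm ⟨y.1, hsub' y.2⟩ : Set (EucSp d))), _⟩ : Set (EucSp d))) = y.1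
      have h1 : (⟨((e.symm ⟨y.1, hsub' y.2⟩ : Set (EucSp d))), _⟩ : ↥(corona T k P)) =
          e.symm ⟨y.1, hsub' y.2⟩ := Subtype.ext rfl
      rw [h1, OrderIso.apply_symm_apply]
    · intro x y
      show (e ⟨x.1, hsub x.2⟩ : Set (EucSp d)) ⊆ (e ⟨y.1, hsub y.2⟩ : Set (EucSp d)) ↔ _
      constructor
      · intro h
        exact e.le_iff_le.1 h
      · intro h
        exact e.monotone (show (⟨x.1, hsub x.2⟩ : ↥(corona T k P)) ≤ ⟨y.1, hsub y.2⟩ from h)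
    · intro hPm hP'm
      apply Subtype.ext
      show ((e ⟨P, hsub hPm⟩ : Set (EucSp d))) = P'
      rw [he (hsub hPm) (hsub' hP'm)]
  refine ⟨part1, ?_⟩
  apply Cardinal.mk_le_of_surjective
    (f := Quot.map (fun x => x) (fun a b hab => part1 a.1 a.2 b.1 b.2 hab))
  intro q
  exact Quot.inductionOn q (fun x => ⟨Quot.mk _ x, rfl⟩)

end
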